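/- Let T = T1 · T2 where, for a reference R and integer k ≥ 0, h1 is such that if h1 < |T1| then T1[|T1|−h1..|T1|] cannot be factorized into k symbols and k+1 substrings of R, and similarly for h2 and T2. Define h = h2 if h2 < |T2|, and h = h1 + |T2| otherwise. Then if h < |T|, the suffix T[|T|−h..|T|] cannot be factorized into k symbols and k+1 substrings of R. -/

import Mathlib

/-- `S` can be factorized into (at most) `k` single symbols and (at most)
`k+1` substrings of `R`, i.e., `S = u_0 c_1 u_1 ⋯ c_k u_k` with each `c_i` a
symbol and each `u_i` a (possibly empty) substring of `R`. -/
def FactorizableInto (R : List ℕ) (k : ℕ) (S : List ℕ) : Prop :=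
  ∃ parts : List (ℕ ⊕ List ℕ),
    (parts.map (Sum.elim (fun a => [a]) id)).flatten = S ∧
    (parts.filter Sum.isLeft).length ≤ k ∧
    (parts.filter Sum.isRight).length ≤ k + 1 ∧
    ∀ u : List ℕ, Sum.inr u ∈ parts → u <:+: R

lemma prefix_parts (parts : List (ℕ ⊕ List ℕ)) :
    ∀ P : List ℕ, P <+: (parts.map (Sum.elim (fun a => [a]) id)).flatten →
    ∃ parts' : List (ℕ ⊕ List ℕ),
      (parts'.map (Sum.elim (fun a => [a]) id)).flatten = P ∧
      (parts'.filter Sum.isLeft).length ≤ (parts.filter Sum.isLeft).length ∧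
      (parts'.filter Sum.isRight).length ≤ (parts.filter Sum.isRight).length ∧
      ∀ u : List ℕ, Sum.inr u ∈ parts' → ∃ v, Sum.inr v ∈ parts ∧ u <+: v := by
  induction parts with
  | nil =>
    intro P hP
    simp at hP
    exact ⟨[], by simp [hP], by simp, by simp, by simp⟩
  | cons p rest ih =>
    intro P hP
    simp only [List.map_cons, List.flatten_cons] at hP
    set f : ℕ ⊕ List ℕ → List ℕ := Sum.elim (fun a => [a]) id with hf
    by_cases hlen : P.length ≤ (f p).length
    · have hPfp : P <+: f p :=
        List.prefix_of_prefix_length_le hP (List.prefix_append _ _) hlen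
      cases p with
      | inl a =>
        obtain ⟨t, ht⟩ := hPfp
        match P, t, ht with
        | [], _, _ => exact ⟨[], by simp, by simp, by simp, by simp⟩
        | [x], [], ht =>
          simp [f] at ht
          exact ⟨[Sum.inl x], by simp [f, ht], by simp [List.filter], by simp, by simp⟩
      | inr u =>
        refine ⟨[Sum.inr P], by simp [f], by simp, ?_, ?_⟩
        · simp [List.filter]
        · intro w hw
          simp at hw
          exact ⟨u, by simp, hw ▸ hPfp⟩
    · push_neg at hlen
      have hfpP : f p <+: P :=
        List.prefix_of_prefix_length_le (List.prefix_append _ _) hP hlen.le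
      obtain ⟨P', rfl⟩ := hfpP
      have hP' : P' <+: (rest.map f).flatten := by
        obtain ⟨t, ht⟩ := hP
        rw [List.append_assoc] at ht
        exact ⟨t, (List.append_cancel_left ht)⟩
      obtain ⟨parts'', h1, h2, h3, h4⟩ := ih P' hP'
      refine ⟨p :: parts'', by simp [f, h1], ?_, ?_, ?_⟩
      · cases p <;> simp [List.filter] <;> omega
      · cases p <;> simp [List.filter] <;> omega
      · intro w hw
        rcases List.mem_cons.1 hw with h | h
        · cases p with
          | inl a => simp at h
          | inr u => exact ⟨u, by simp, by simp at h; simp [h]⟩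
        · obtain ⟨v, hv, hvp⟩ := h4 w h
          exact ⟨v, List.mem_cons_of_mem _ hv, hvp⟩

lemma fact_prefix {R : List ℕ} {k : ℕ} {S P : List ℕ}
    (hF : FactorizableInto R k S) (hP : P <+: S) : FactorizableInto R k P := by
  obtain ⟨parts, hflat, hl, hr, hmem⟩ := hF
  obtain ⟨parts', h1, h2, h3, h4⟩ := prefix_parts parts P (hflat ▸ hP)
  refine ⟨parts', h1, h2.trans hl, h3.trans hr, fun u hu => ?_⟩
  obtain ⟨v, hv, huv⟩ := h4 u hu
  exact huv.isInfix.trans (hmem v hv)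

/-- Merging two suffix random access data structures: let `T = T1 · T2`, where
`h1 < |T1|` implies the length-`(h1+1)` suffix of `T1` is not factorizable
into `k` symbols and `k+1` substrings of `R` (and similarly for `h2`, `T2`).
With `h := h2` if `h2 < |T2|` and `h := h1 + |T2|` otherwise: if `h < |T|`,
then the length-`(h+1)` suffix of `T` is not factorizable either. -/
theorem stmt17 (R T1 T2 : List ℕ) (k h1 h2 : ℕ)
    (hh1 : h1 ≤ T1.length) (hh2 : h2 ≤ T2.length)
    (H1 : h1 < T1.length →
      ¬ FactorizableInto R k (T1.drop (T1.length - h1 - 1)))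
    (H2 : h2 < T2.length →
      ¬ FactorizableInto R k (T2.drop (T2.length - h2 - 1))) :
    (if h2 < T2.length then h2 else h1 + T2.length) < (T1 ++ T2).length →
      ¬ FactorizableInto R k ((T1 ++ T2).drop
        ((T1 ++ T2).length - (if h2 < T2.length then h2 else h1 + T2.length) - 1)) := by
  by_cases hc : h2 < T2.length
  · simp only [if_pos hc, List.length_append]
    intro _
    have heq : (T1 ++ T2).drop (T1.length + T2.length - h2 - 1)
        = T2.drop (T2.length - h2 - 1) := by
      have : T1.length + T2.length - h2 - 1 = T1.length + (T2.length - h2 - 1) := by omega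
      rw [this, List.drop_append]
      simp [List.drop_eq_nil_of_le (Nat.le_add_right T1.length (T2.length - h2 - 1))]
    rw [heq]
    exact H2 hc
  · simp only [if_neg hc, List.length_append]
    intro hlt
    have hh2' : h2 = T2.length := by omega
    have hlt1 : h1 < T1.length := by omega
    have heq : (T1 ++ T2).drop (T1.length + T2.length - (h1 + T2.length) - 1)
        = T1.drop (T1.length - h1 - 1) ++ T2 := by
      have : T1.length + T2.length - (h1 + T2.length) - 1 = T1.length - h1 - 1 := by omega
      rw [this, List.drop_append_of_le_length (by omega)]
    rw [heq]
    intro hF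
    exact H1 hlt1 (fact_prefix hF (List.prefix_append _ _))
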